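/- Let C be a real symmetric positive definite n×n matrix with unit diagonal, let b⁽¹⁾, …, b⁽ˢ⁾ ∈ ℝⁿ, and let k ≥ 1 with 2k ≤ n. Let D ⊆ {1,…,n}, and for each j let S_j ⊆ D with |S_j| = min(k,|D|) be a set produced by the Orthogonal Matching Pursuit greedy rule within D for target j (starting from ∅, each step adds the m ∈ D not yet selected maximizing |b⁽ʲ⁾_m − C_{m,T} (C_T)⁻¹ b⁽ʲ⁾_T| where T is the current set). Define F_OMP(D) := Σ_j R²_j(S_j) and F̂(D) := Σ_j max over S ⊆ D with |S| ≤ k of Σ_{i∈S} (b⁽ʲ⁾_i)². Suppose γ > 0 satisfies Σ_{i∈S} (b⁽ʲ⁾_i)² ≥ γ · R²_j(S) for every j and every S with |S| ≤ k. Then ((1 − e^{−λmin(C,2k)²}) / λmax(C,k)) · F̂(D) ≤ F_OMP(D) ≤ F̂(D)/γ. -/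

import Mathlib

open scoped Matrix

/-- The smallest eigenvalue of a real symmetric (Hermitian) matrix. -/
noncomputable def lambdaMin {m : Type*} [Fintype m] [DecidableEq m] (A : Matrix m m ℝ) : ℝ :=
  if hA : A.IsHermitian then ⨅ i, hA.eigenvalues i else 0

/-- The largest eigenvalue of a real symmetric (Hermitian) matrix. -/
noncomputable def lambdaMax {m : Type*} [Fintype m] [DecidableEq m] (A : Matrix m m ℝ) : ℝ :=
  if hA : A.IsHermitian then ⨆ i, hA.eigenvalues i else 0

/-- The principal submatrix of `C` on rows and columns in `S`. -/
def subMat {ι : Type*} (C : Matrix ι ι ℝ) (S : Finset ι) : Matrix S S ℝ :=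
  fun i j => C i j

/-- `R²(S) = b_Sᵀ (C_S)⁻¹ b_S`, the squared multiple correlation. -/
noncomputable def R2 {ι : Type*} [Fintype ι] [DecidableEq ι]
    (C : Matrix ι ι ℝ) (b : ι → ℝ) (S : Finset ι) : ℝ :=
  (fun i : S => b i) ⬝ᵥ (subMat C S)⁻¹ *ᵥ (fun i : S => b i)

/-- `λmin(C,k)`: the smallest eigenvalue of any `k × k` principal submatrix of `C`. -/
noncomputable def lambdaMinK {n : ℕ} (C : Matrix (Fin n) (Fin n) ℝ) (k : ℕ) : ℝ :=
  sInf {x | ∃ S : Finset (Fin n), S.card = k ∧ x = lambdaMin (subMat C S)}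

/-- `λmax(C,k)`: the largest eigenvalue of any `k × k` principal submatrix of `C`. -/
noncomputable def lambdaMaxK {n : ℕ} (C : Matrix (Fin n) (Fin n) ℝ) (k : ℕ) : ℝ :=
  sSup {x | ∃ S : Finset (Fin n), S.card = k ∧ x = lambdaMax (subMat C S)}

/-- `Cov(Res(Z|S), X_m) = b_m - C_{m,S} (C_S)⁻¹ b_S`. -/
noncomputable def resCov {ι : Type*} [Fintype ι] [DecidableEq ι]
    (C : Matrix ι ι ℝ) (b : ι → ℝ) (S : Finset ι) (m : ι) : ℝ :=
  b m - (fun i : S => C m i) ⬝ᵥ ((subMat C S)⁻¹ *ᵥ (fun i : S => b i))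

/-- `T` is a run of the Orthogonal Matching Pursuit greedy rule within the dictionary
`D` (for target covariances `b`), run for `min(k,|D|)` steps. -/
def IsOMPChain {n : ℕ} (C : Matrix (Fin n) (Fin n) ℝ) (b : Fin n → ℝ)
    (D : Finset (Fin n)) (k : ℕ) (T : ℕ → Finset (Fin n)) : Prop :=
  T 0 = ∅ ∧
    ∀ i < min k D.card, ∃ m ∈ D, m ∉ T i ∧ T (i + 1) = insert m (T i) ∧
      ∀ x ∈ D, x ∉ T i → |resCov C b (T i) x| ≤ |resCov C b (T i) m|

/-- The modular approximation objective
`F̂(D) = Σ_j max_{S ⊆ D, |S| ≤ k} Σ_{i∈S} (b⁽ʲ⁾_i)²`. -/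
noncomputable def Fma {n s : ℕ} (bs : Fin s → Fin n → ℝ) (k : ℕ)
    (D : Finset (Fin n)) : ℝ :=
  ∑ j, sSup {x | ∃ S ⊆ D, S.card ≤ k ∧ x = ∑ i ∈ S, (bs j i) ^ 2}

namespace OMPAux

section spectral
variable {m : Type*} [Fintype m] [DecidableEq m]


lemma dot_trans (A : Matrix m m ℝ) (x w : m → ℝ) :
    x ⬝ᵥ A *ᵥ w = (Aᵀ *ᵥ x) ⬝ᵥ w := by
  rw [Matrix.dotProduct_mulVec, ← Matrix.vecMul_transpose]
  rfl

lemma star_eq_transpose (A : Matrix m m ℝ) : star A = Aᵀ := by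
  rw [Matrix.star_eq_conjTranspose, Matrix.conjTranspose_eq_transpose_of_trivial]

lemma quadform_repr {A : Matrix m m ℝ} (hA : A.IsHermitian) (x : m → ℝ) :
    ∃ y : m → ℝ, x ⬝ᵥ A *ᵥ x = ∑ i, hA.eigenvalues i * y i ^ 2 ∧ x ⬝ᵥ x = ∑ i, y i ^ 2 := by
  classical
  set U : Matrix m m ℝ := (hA.eigenvectorUnitary : Matrix m m ℝ) with hU
  have hU1 : U * star U = 1 := Matrix.mem_unitaryGroup_iff.mp hA.eigenvectorUnitary.2
  have hU2 : star U * U = 1 := Matrix.mem_unitaryGroup_iff'.mp hA.eigenvectorUnitary.2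
  set y : m → ℝ := (star U) *ᵥ x with hy
  have hxUy : U *ᵥ y = x := by
    rw [hy, Matrix.mulVec_mulVec, hU1, Matrix.one_mulVec]
  have hdiagform : ∀ z : m → ℝ,
      z ⬝ᵥ (Matrix.diagonal (RCLike.ofReal ∘ hA.eigenvalues) : Matrix m m ℝ) *ᵥ z
        = ∑ i, hA.eigenvalues i * z i ^ 2 := by
    intro z
    unfold dotProduct
    apply Finset.sum_congr rfl
    intro i _
    rw [Matrix.mulVec_diagonal]
    simp [RCLike.ofReal_real_eq_id]
    ring
  refine ⟨y, ?_, ?_⟩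
  · conv_lhs => rw [hA.spectral_theorem, Unitary.conjStarAlgAut_apply]
    rw [← Matrix.mulVec_mulVec, ← Matrix.mulVec_mulVec, dot_trans, ← star_eq_transpose, ← hy,
      hdiagform]
  · conv_lhs => rw [← hxUy]
    rw [dot_trans, Matrix.mulVec_mulVec, ← star_eq_transpose, hU2, Matrix.one_mulVec]
    unfold dotProduct
    exact Finset.sum_congr rfl (fun i _ => by ring)

lemma lambdaMin_eq {A : Matrix m m ℝ} (hA : A.IsHermitian) :
    lambdaMin A = ⨅ i, hA.eigenvalues i := dif_pos hA

lemma lambdaMax_eq {A : Matrix m m ℝ} (hA : A.IsHermitian) :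
    lambdaMax A = ⨆ i, hA.eigenvalues i := dif_pos hA

lemma lambdaMin_le_eigen [Nonempty m] {A : Matrix m m ℝ} (hA : A.IsHermitian) (i : m) :
    lambdaMin A ≤ hA.eigenvalues i := by
  rw [lambdaMin_eq hA]
  exact ciInf_le (Set.Finite.bddBelow (Set.finite_range _)) i

lemma eigen_le_lambdaMax [Nonempty m] {A : Matrix m m ℝ} (hA : A.IsHermitian) (i : m) :
    hA.eigenvalues i ≤ lambdaMax A := by
  rw [lambdaMax_eq hA]
  exact le_ciSup (Set.Finite.bddAbove (Set.finite_range _)) i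

lemma quad_le_lambdaMax [Nonempty m] {A : Matrix m m ℝ} (hA : A.IsHermitian) (x : m → ℝ) :
    x ⬝ᵥ A *ᵥ x ≤ lambdaMax A * (x ⬝ᵥ x) := by
  obtain ⟨y, h1, h2⟩ := quadform_repr hA x
  rw [h1, h2, Finset.mul_sum]
  exact Finset.sum_le_sum fun i _ =>
    mul_le_mul_of_nonneg_right (eigen_le_lambdaMax hA i) (sq_nonneg _)

lemma lambdaMin_quad_le [Nonempty m] {A : Matrix m m ℝ} (hA : A.IsHermitian) (x : m → ℝ) :
    lambdaMin A * (x ⬝ᵥ x) ≤ x ⬝ᵥ A *ᵥ x := by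
  obtain ⟨y, h1, h2⟩ := quadform_repr hA x
  rw [h1, h2, Finset.mul_sum]
  exact Finset.sum_le_sum fun i _ =>
    mul_le_mul_of_nonneg_right (lambdaMin_le_eigen hA i) (sq_nonneg _)

lemma lambdaMin_pos [Nonempty m] {A : Matrix m m ℝ} (hA : A.PosDef) : 0 < lambdaMin A := by
  rw [lambdaMin_eq hA.1]
  obtain ⟨i, hi⟩ := exists_eq_ciInf_of_finite (f := hA.1.eigenvalues)
  rw [← hi]
  exact hA.eigenvalues_pos i

lemma lambdaMax_pos [Nonempty m] {A : Matrix m m ℝ} (hA : A.PosDef) : 0 < lambdaMax A := by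
  have i : m := Classical.arbitrary m
  exact lt_of_lt_of_le (hA.eigenvalues_pos i) (eigen_le_lambdaMax hA.1 i)


end spectral

section main
variable {n : ℕ}

lemma dot_restrict (S : Finset (Fin n)) (α β : Fin n → ℝ) (hα : ∀ i ∉ S, α i = 0) :
    α ⬝ᵥ β = (fun i : S => α i) ⬝ᵥ (fun i : S => β i) := by
  classical
  unfold dotProduct
  rw [Finset.sum_coe_sort S (fun i => α i * β i)]
  exact (Finset.sum_subset S.subset_univ (fun i _ hi => by rw [hα i hi, zero_mul])).symm

lemma mulVec_apply_restrict (C : Matrix (Fin n) (Fin n) ℝ) (S : Finset (Fin n))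
    (β : Fin n → ℝ) (hβ : ∀ i ∉ S, β i = 0) (x : Fin n) :
    (C *ᵥ β) x = (fun i : S => C x i) ⬝ᵥ (fun i : S => β i) := by
  classical
  show (fun i => C x i) ⬝ᵥ β = _
  rw [dotProduct_comm, dot_restrict S β (fun i => C x i) hβ, dotProduct_comm]

lemma quad_restrict (C : Matrix (Fin n) (Fin n) ℝ) (S : Finset (Fin n))
    (α β : Fin n → ℝ) (hα : ∀ i ∉ S, α i = 0) (hβ : ∀ i ∉ S, β i = 0) :
    α ⬝ᵥ C *ᵥ β = (fun i : S => α i) ⬝ᵥ (subMat C S) *ᵥ (fun i : S => β i) := by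
  classical
  rw [dot_restrict S α (C *ᵥ β) hα]
  congr 1
  funext i
  exact mulVec_apply_restrict C S β hβ i

lemma subMat_posDef {C : Matrix (Fin n) (Fin n) ℝ} (hC : C.PosDef) (S : Finset (Fin n)) :
    (subMat C S).PosDef := by
  classical
  rw [Matrix.posDef_iff_dotProduct_mulVec]
  constructor
  · ext i j
    simpa [subMat] using congrFun (congrFun hC.1 i.1) j.1
  · intro x hx
    set p : Fin n → ℝ := fun i => if h : i ∈ S then x ⟨i, h⟩ else 0 with hp
    have hsupp : ∀ i ∉ S, p i = 0 := fun i hi => dif_neg hi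
    have hres : (fun i : S => p i) = x := by
      funext i
      simp [hp, i.2]
    have hpne : p ≠ 0 := by
      intro h0
      apply hx
      funext i
      have h1 : p i.1 = 0 := by rw [h0]; rfl
      rw [hp] at h1
      simp only [dif_pos i.2] at h1
      simpa using h1
    have := hC.dotProduct_mulVec_pos hpne
    rw [show star p = p from funext fun i => rfl] at this
    rw [quad_restrict C S p p hsupp hsupp, hres] at this
    rw [show star x = x from funext fun i => rfl]
    exact this


/-- The quadratic objective whose max over supports in `S` is `R2 S`. -/
noncomputable def Q (C : Matrix (Fin n) (Fin n) ℝ) (b : Fin n → ℝ) (α : Fin n → ℝ) : ℝ :=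
  2 * (α ⬝ᵥ b) - α ⬝ᵥ C *ᵥ α

/-- The optimal coefficient vector for support `S`, extended by zero. -/
noncomputable def gopt (C : Matrix (Fin n) (Fin n) ℝ) (b : Fin n → ℝ) (S : Finset (Fin n)) :
    Fin n → ℝ :=
  fun i => if h : i ∈ S then ((subMat C S)⁻¹ *ᵥ fun j : S => b j) ⟨i, h⟩ else 0

lemma gopt_supp (C : Matrix (Fin n) (Fin n) ℝ) (b : Fin n → ℝ) (S : Finset (Fin n)) :
    ∀ i ∉ S, gopt C b S i = 0 := fun i hi => dif_neg hi

lemma gopt_restrict (C : Matrix (Fin n) (Fin n) ℝ) (b : Fin n → ℝ) (S : Finset (Fin n)) :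
    (fun i : S => gopt C b S i) = (subMat C S)⁻¹ *ᵥ fun j : S => b j := by
  funext i; exact dif_pos i.2

lemma subMat_mul_inv {C : Matrix (Fin n) (Fin n) ℝ} (hC : C.PosDef) (S : Finset (Fin n))
    (v : S → ℝ) : (subMat C S) *ᵥ ((subMat C S)⁻¹ *ᵥ v) = v := by
  rw [Matrix.mulVec_mulVec, Matrix.mul_nonsing_inv _ ((subMat_posDef hC S).det_pos.ne').isUnit,
    Matrix.one_mulVec]

lemma mulVec_gopt_apply {C : Matrix (Fin n) (Fin n) ℝ} (b : Fin n → ℝ) (S : Finset (Fin n))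
    (x : Fin n) :
    (C *ᵥ gopt C b S) x = (fun i : S => C x i) ⬝ᵥ ((subMat C S)⁻¹ *ᵥ fun j : S => b j) := by
  rw [mulVec_apply_restrict C S _ (gopt_supp C b S) x, gopt_restrict]

lemma resCov_eq {C : Matrix (Fin n) (Fin n) ℝ} (b : Fin n → ℝ) (S : Finset (Fin n)) (x : Fin n) :
    resCov C b S x = b x - (C *ᵥ gopt C b S) x := by
  rw [mulVec_gopt_apply]; rfl

lemma mulVec_gopt_mem {C : Matrix (Fin n) (Fin n) ℝ} (hC : C.PosDef) (b : Fin n → ℝ)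
    {S : Finset (Fin n)} {x : Fin n} (hx : x ∈ S) : (C *ᵥ gopt C b S) x = b x := by
  rw [mulVec_gopt_apply]
  have : (fun i : S => C x i) ⬝ᵥ ((subMat C S)⁻¹ *ᵥ fun j : S => b j)
      = ((subMat C S) *ᵥ ((subMat C S)⁻¹ *ᵥ fun j : S => b j)) ⟨x, hx⟩ := rfl
  rw [this, subMat_mul_inv hC]

lemma Q_gopt {C : Matrix (Fin n) (Fin n) ℝ} (hC : C.PosDef) (b : Fin n → ℝ) (S : Finset (Fin n)) :
    Q C b (gopt C b S) = R2 C b S := by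
  have h1 : gopt C b S ⬝ᵥ b
      = ((subMat C S)⁻¹ *ᵥ fun j : S => b j) ⬝ᵥ (fun j : S => b j) := by
    rw [dot_restrict S _ b (gopt_supp C b S), gopt_restrict]
  have h2 : gopt C b S ⬝ᵥ C *ᵥ gopt C b S
      = ((subMat C S)⁻¹ *ᵥ fun j : S => b j) ⬝ᵥ (fun j : S => b j) := by
    rw [quad_restrict C S _ _ (gopt_supp C b S) (gopt_supp C b S), gopt_restrict]
    congr 1
    exact subMat_mul_inv hC S _
  rw [Q, h1, h2, R2, dotProduct_comm]
  ring

lemma dot_symm {C : Matrix (Fin n) (Fin n) ℝ} (hC : C.IsHermitian) (α δ : Fin n → ℝ) :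
    α ⬝ᵥ C *ᵥ δ = δ ⬝ᵥ C *ᵥ α := by
  have hCT : Cᵀ = C := by
    rw [← Matrix.conjTranspose_eq_transpose_of_trivial]; exact hC
  rw [Matrix.dotProduct_mulVec]
  nth_rewrite 1 [← hCT]
  rw [Matrix.vecMul_transpose, dotProduct_comm]

lemma Q_add {C : Matrix (Fin n) (Fin n) ℝ} (hC : C.IsHermitian) (b α δ : Fin n → ℝ) :
    Q C b (α + δ) = Q C b α + 2 * (δ ⬝ᵥ (b - C *ᵥ α)) - δ ⬝ᵥ C *ᵥ δ := by
  have h2 : (α + δ) ⬝ᵥ C *ᵥ (α + δ)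
      = α ⬝ᵥ C *ᵥ α + 2 * (δ ⬝ᵥ C *ᵥ α) + δ ⬝ᵥ C *ᵥ δ := by
    simp only [Matrix.mulVec_add, dotProduct_add, add_dotProduct]
    rw [dot_symm hC α δ]
    ring
  rw [Q, Q, add_dotProduct, h2, dotProduct_sub]
  ring

lemma Q_le_R2 {C : Matrix (Fin n) (Fin n) ℝ} (hC : C.PosDef) (b : Fin n → ℝ)
    {S : Finset (Fin n)} {α : Fin n → ℝ} (hα : ∀ i ∉ S, α i = 0) :
    Q C b α ≤ R2 C b S := by
  classical
  set g := gopt C b S with hg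
  set δ := α - g with hδ
  have hαg : α = g + δ := by rw [hδ]; ring
  have hδsupp : ∀ i ∉ S, δ i = 0 := by
    intro i hi
    have hgi := gopt_supp C b S i hi
    simp [hδ, hg, hα i hi, hgi]
  have hcross : δ ⬝ᵥ (b - C *ᵥ g) = 0 := by
    apply Finset.sum_eq_zero
    intro i _
    by_cases hi : i ∈ S
    · have : (b - C *ᵥ g) i = 0 := by
        simp [hg, mulVec_gopt_mem hC b hi]
      rw [this, mul_zero]
    · rw [hδsupp i hi, zero_mul]
  have hquad : 0 ≤ δ ⬝ᵥ C *ᵥ δ := by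
    have := hC.posSemidef.dotProduct_mulVec_nonneg δ
    rwa [show star δ = δ from funext fun i => rfl] at this
  calc Q C b α = Q C b g + 2 * (δ ⬝ᵥ (b - C *ᵥ g)) - δ ⬝ᵥ C *ᵥ δ := by
        rw [hαg, Q_add hC.1]
    _ = R2 C b S - δ ⬝ᵥ C *ᵥ δ := by rw [hcross, Q_gopt hC]; ring
    _ ≤ R2 C b S := by linarith

lemma R2_nonneg {C : Matrix (Fin n) (Fin n) ℝ} (hC : C.PosDef) (b : Fin n → ℝ)
    (S : Finset (Fin n)) : 0 ≤ R2 C b S := by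
  have h := Q_le_R2 hC b (S := S) (α := 0) (fun i _ => rfl)
  simpa [Q] using h

lemma R2_mono {C : Matrix (Fin n) (Fin n) ℝ} (hC : C.PosDef) (b : Fin n → ℝ)
    {S S' : Finset (Fin n)} (h : S ⊆ S') : R2 C b S ≤ R2 C b S' := by
  rw [← Q_gopt hC b S]
  exact Q_le_R2 hC b (fun i hi => gopt_supp C b S i (fun hm => hi (h hm)))


/-- Fact A': the gain of adding `m` is at least the squared residual covariance. -/
lemma gain_lower {C : Matrix (Fin n) (Fin n) ℝ} (hC : C.PosDef) (b : Fin n → ℝ)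
    {S : Finset (Fin n)} {m : Fin n} (hdm : C m m = 1) :
    R2 C b S + (resCov C b S m) ^ 2 ≤ R2 C b (insert m S) := by
  classical
  set r := resCov C b S m with hr
  set g := gopt C b S with hg
  set δ : Fin n → ℝ := r • (Pi.single m 1 : Fin n → ℝ) with hδ
  have hsupp : ∀ i ∉ insert m S, (g + δ) i = 0 := by
    intro i hi
    have him : i ≠ m := fun h => hi (by rw [h]; exact Finset.mem_insert_self m S)
    have hiS : i ∉ S := fun h => hi (Finset.mem_insert_of_mem h)
    simp [hδ, hg, gopt_supp C b S i hiS, Pi.single_eq_of_ne him]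
  have hQ : Q C b (g + δ) = R2 C b S + r ^ 2 := by
    rw [Q_add hC.1]
    have h1 : δ ⬝ᵥ (b - C *ᵥ g) = r * r := by
      have hm : (b - C *ᵥ g) m = r := by
        rw [hr, resCov_eq b S m]; rfl
      rw [hδ]
      simp only [smul_dotProduct, single_dotProduct, smul_eq_mul, one_mul, hm]
    have h2 : δ ⬝ᵥ C *ᵥ δ = r ^ 2 := by
      rw [hδ]
      simp only [Matrix.mulVec_smul, smul_dotProduct, dotProduct_smul, smul_eq_mul]
      rw [Matrix.mulVec_single, single_dotProduct]
      simp only [MulOpposite.op_one, one_smul, Matrix.col_apply, mul_one, one_mul, hdm]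
      ring
    rw [h1, h2, Q_gopt hC]
    ring
  calc R2 C b S + r ^ 2 = Q C b (g + δ) := hQ.symm
    _ ≤ R2 C b (insert m S) := Q_le_R2 hC b hsupp

/-- Fact B': bounding the gap towards a superset. -/
lemma gap_upper {C : Matrix (Fin n) (Fin n) ℝ} (hC : C.PosDef) (b : Fin n → ℝ)
    {T U : Finset (Fin n)} (hTU : T ⊆ U) {lam : ℝ} (hlam : 0 < lam)
    (hquad : ∀ α : Fin n → ℝ, (∀ i ∉ U, α i = 0) → lam * (α ⬝ᵥ α) ≤ α ⬝ᵥ C *ᵥ α) :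
    R2 C b U ≤ R2 C b T + (∑ x ∈ U \ T, (resCov C b T x) ^ 2) / lam := by
  classical
  set g := gopt C b T with hg
  set δ : Fin n → ℝ := gopt C b U - g with hδ
  have hδsupp : ∀ i ∉ U, δ i = 0 := by
    intro i hi
    have hiT : i ∉ T := fun h => hi (hTU h)
    simp [hδ, hg, gopt_supp C b U i hi, gopt_supp C b T i hiT]
  have hRU : R2 C b U = R2 C b T + 2 * (δ ⬝ᵥ (b - C *ᵥ g)) - δ ⬝ᵥ C *ᵥ δ := by
    have hgu : gopt C b U = g + δ := by rw [hδ]; ring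
    rw [← Q_gopt hC b U, hgu, Q_add hC.1, Q_gopt hC]
  have hcross : δ ⬝ᵥ (b - C *ᵥ g) = ∑ x ∈ U \ T, δ x * resCov C b T x := by
    unfold dotProduct
    rw [← Finset.sum_subset (Finset.subset_univ (U \ T))]
    · apply Finset.sum_congr rfl
      intro x hx
      rw [resCov_eq b T x]
      rfl
    · intro x _ hx
      by_cases hxU : x ∈ U
      · have hxT : x ∈ T := by
          by_contra hxT
          exact hx (Finset.mem_sdiff.mpr ⟨hxU, hxT⟩)
        have h0 : (b - C *ᵥ g) x = 0 := by
          simp [hg, mulVec_gopt_mem hC b hxT]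
        rw [h0, mul_zero]
      · rw [hδsupp x hxU, zero_mul]
  have hdd : δ ⬝ᵥ δ = ∑ x, (δ x) ^ 2 := by
    unfold dotProduct
    exact Finset.sum_congr rfl (fun x _ => by ring)
  have hsum : ∑ x ∈ U \ T, (δ x) ^ 2 ≤ δ ⬝ᵥ δ := by
    rw [hdd]
    exact Finset.sum_le_sum_of_subset_of_nonneg (Finset.subset_univ _)
      (fun i _ _ => sq_nonneg _)
  have hquadlow : lam * ∑ x ∈ U \ T, (δ x) ^ 2 ≤ δ ⬝ᵥ C *ᵥ δ :=
    le_trans (by nlinarith) (hquad δ hδsupp)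
  have hterm : ∀ x ∈ U \ T,
      2 * (δ x * resCov C b T x) - lam * (δ x) ^ 2 ≤ (resCov C b T x) ^ 2 / lam := by
    intro x _
    rw [le_div_iff₀ hlam]
    nlinarith [sq_nonneg (lam * δ x - resCov C b T x)]
  have hmain : 2 * (∑ x ∈ U \ T, δ x * resCov C b T x) - δ ⬝ᵥ C *ᵥ δ
      ≤ ∑ x ∈ U \ T, (resCov C b T x) ^ 2 / lam := by
    calc 2 * (∑ x ∈ U \ T, δ x * resCov C b T x) - δ ⬝ᵥ C *ᵥ δ
        ≤ 2 * (∑ x ∈ U \ T, δ x * resCov C b T x) - lam * ∑ x ∈ U \ T, (δ x) ^ 2 := by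
          linarith
      _ = ∑ x ∈ U \ T, (2 * (δ x * resCov C b T x) - lam * (δ x) ^ 2) := by
          rw [Finset.sum_sub_distrib, Finset.mul_sum, Finset.mul_sum]
      _ ≤ ∑ x ∈ U \ T, (resCov C b T x) ^ 2 / lam := Finset.sum_le_sum hterm
  rw [hRU, hcross, Finset.sum_div]
  linarith


lemma minset_finite (C : Matrix (Fin n) (Fin n) ℝ) (k : ℕ) :
    {x | ∃ S : Finset (Fin n), S.card = k ∧ x = lambdaMin (subMat C S)}.Finite :=
  (Set.finite_range (fun S : Finset (Fin n) => lambdaMin (subMat C S))).subset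
    (fun x ⟨S, _, hx⟩ => ⟨S, hx.symm⟩)

lemma maxset_finite (C : Matrix (Fin n) (Fin n) ℝ) (k : ℕ) :
    {x | ∃ S : Finset (Fin n), S.card = k ∧ x = lambdaMax (subMat C S)}.Finite :=
  (Set.finite_range (fun S : Finset (Fin n) => lambdaMax (subMat C S))).subset
    (fun x ⟨S, _, hx⟩ => ⟨S, hx.symm⟩)

lemma exists_card_set (k : ℕ) (hk : k ≤ n) : ∃ S : Finset (Fin n), S.card = k := by
  obtain ⟨S, -, -, hS⟩ := Finset.exists_subsuperset_card_eq
    (Finset.empty_subset (Finset.univ : Finset (Fin n)))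
    (by simp) (by simpa [Finset.card_univ] using hk)
  exact ⟨S, hS⟩

lemma nonempty_coe {S : Finset (Fin n)} (h : 0 < S.card) : Nonempty ↥S := by
  obtain ⟨x, hx⟩ := Finset.card_pos.mp h
  exact ⟨⟨x, hx⟩⟩

lemma lambdaMinK_le {C : Matrix (Fin n) (Fin n) ℝ} {k : ℕ} {S : Finset (Fin n)}
    (hS : S.card = k) : lambdaMinK C k ≤ lambdaMin (subMat C S) :=
  csInf_le (minset_finite C k).bddBelow ⟨S, hS, rfl⟩

lemma lambdaMax_le_lambdaMaxK {C : Matrix (Fin n) (Fin n) ℝ} {k : ℕ} {S : Finset (Fin n)}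
    (hS : S.card = k) : lambdaMax (subMat C S) ≤ lambdaMaxK C k :=
  le_csSup (maxset_finite C k).bddAbove ⟨S, hS, rfl⟩

lemma lambdaMinK_mem {C : Matrix (Fin n) (Fin n) ℝ} {k : ℕ} (hk : k ≤ n) :
    ∃ S : Finset (Fin n), S.card = k ∧ lambdaMinK C k = lambdaMin (subMat C S) := by
  obtain ⟨S, hS⟩ := exists_card_set k hk
  have hne : {x | ∃ S : Finset (Fin n), S.card = k ∧ x = lambdaMin (subMat C S)}.Nonempty :=
    ⟨lambdaMin (subMat C S), S, hS, rfl⟩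
  exact hne.csInf_mem (minset_finite C k)

lemma lambdaMinK_pos {C : Matrix (Fin n) (Fin n) ℝ} (hC : C.PosDef) {k : ℕ}
    (hk0 : 0 < k) (hk : k ≤ n) : 0 < lambdaMinK C k := by
  obtain ⟨S, hS, heq⟩ := lambdaMinK_mem (C := C) hk
  haveI := nonempty_coe (S := S) (by omega)
  rw [heq]
  exact lambdaMin_pos (subMat_posDef hC S)

lemma lambdaMinK_le_one {C : Matrix (Fin n) (Fin n) ℝ} (hC : C.PosDef)
    (hdiag : ∀ i, C i i = 1) {k : ℕ} (hk0 : 0 < k) (hk : k ≤ n) : lambdaMinK C k ≤ 1 := by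
  obtain ⟨S, hS, heq⟩ := lambdaMinK_mem (C := C) hk
  obtain ⟨x, hx⟩ := Finset.card_pos.mp (show 0 < S.card by omega)
  haveI : Nonempty ↥S := ⟨⟨x, hx⟩⟩
  rw [heq]
  have h := lambdaMin_quad_le (subMat_posDef hC S).1 (Pi.single ⟨x, hx⟩ 1)
  have h1 : (Pi.single (⟨x, hx⟩ : ↥S) (1:ℝ)) ⬝ᵥ (Pi.single ⟨x, hx⟩ 1) = 1 := by
    rw [dotProduct_single]
    simp
  have h2 : (Pi.single (⟨x, hx⟩ : ↥S) (1:ℝ)) ⬝ᵥ (subMat C S) *ᵥ (Pi.single ⟨x, hx⟩ 1) = 1 := by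
    rw [Matrix.mulVec_single, single_dotProduct]
    simpa [subMat] using hdiag x
  rw [h1, h2, mul_one] at h
  exact h

/-- Quadratic-form lower bound for vectors supported on a small set. -/
lemma supported_quad_lower {C : Matrix (Fin n) (Fin n) ℝ} (hC : C.PosDef) {k : ℕ}
    (hk0 : 0 < k) (hkn : k ≤ n) {U : Finset (Fin n)} (hU : U.card ≤ k)
    (α : Fin n → ℝ) (hα : ∀ i ∉ U, α i = 0) :
    lambdaMinK C k * (α ⬝ᵥ α) ≤ α ⬝ᵥ C *ᵥ α := by
  obtain ⟨W, hUW, -, hW⟩ := Finset.exists_subsuperset_card_eq (Finset.subset_univ U)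
    hU (by rw [Finset.card_univ, Fintype.card_fin]; exact hkn)
  have hαW : ∀ i ∉ W, α i = 0 := fun i hi => hα i (fun h => hi (hUW h))
  haveI := nonempty_coe (S := W) (by omega)
  rw [quad_restrict C W α α hαW hαW, dot_restrict W α α hαW]
  calc lambdaMinK C k * ((fun i : W => α i) ⬝ᵥ (fun i : W => α i))
      ≤ lambdaMin (subMat C W) * ((fun i : W => α i) ⬝ᵥ (fun i : W => α i)) := by
        apply mul_le_mul_of_nonneg_right (lambdaMinK_le hW)
        exact Finset.sum_nonneg fun i _ => mul_self_nonneg _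
    _ ≤ _ := lambdaMin_quad_le (subMat_posDef hC W).1 _

lemma lambdaMaxK_pos {C : Matrix (Fin n) (Fin n) ℝ} (hC : C.PosDef) {k : ℕ}
    (hk0 : 0 < k) (hkn : k ≤ n) : 0 < lambdaMaxK C k := by
  obtain ⟨S, hS⟩ := exists_card_set k hkn
  haveI := nonempty_coe (S := S) (by omega)
  exact lt_of_lt_of_le (lambdaMax_pos (subMat_posDef hC S)) (lambdaMax_le_lambdaMaxK hS)

/-- Step 1: the modular proxy is dominated by `λmax(C,k) · R²`. -/
lemma sum_sq_le_lamMax {C : Matrix (Fin n) (Fin n) ℝ} (hC : C.PosDef) {k : ℕ}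
    (hk0 : 0 < k) (hkn : k ≤ n) {S : Finset (Fin n)} (hS : S.card ≤ k) (b : Fin n → ℝ) :
    ∑ i ∈ S, b i ^ 2 ≤ lambdaMaxK C k * R2 C b S := by
  classical
  set lamM := lambdaMaxK C k with hlamM
  have hlamMpos : 0 < lamM := lambdaMaxK_pos hC hk0 hkn
  obtain ⟨S', hSS', -, hS'⟩ := Finset.exists_subsuperset_card_eq (Finset.subset_univ S)
    hS (by rw [Finset.card_univ, Fintype.card_fin]; exact hkn)
  haveI := nonempty_coe (S := S') (by omega)
  set p : Fin n → ℝ := fun i => if i ∈ S then b i else 0 with hp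
  have hpsupp : ∀ i ∉ S, p i = 0 := fun i hi => if_neg hi
  have hpsupp' : ∀ i ∉ S', p i = 0 := fun i hi => hpsupp i (fun h => hi (hSS' h))
  set B := ∑ i ∈ S, b i ^ 2 with hB
  have hBnn : 0 ≤ B := Finset.sum_nonneg fun i _ => sq_nonneg _
  have hpb : p ⬝ᵥ b = B := by
    unfold dotProduct
    rw [← Finset.sum_subset S.subset_univ
      (fun i _ hi => by rw [hpsupp i hi, zero_mul])]
    exact Finset.sum_congr rfl fun i hi => by rw [hp]; simp [hi]; ring
  have hpp : p ⬝ᵥ p = B := by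
    unfold dotProduct
    rw [← Finset.sum_subset S.subset_univ
      (fun i _ hi => by rw [hpsupp i hi, zero_mul])]
    exact Finset.sum_congr rfl fun i hi => by rw [hp]; simp [hi]; ring
  have hquad : p ⬝ᵥ C *ᵥ p ≤ lamM * B := by
    rw [quad_restrict C S' p p hpsupp' hpsupp']
    calc (fun i : S' => p i) ⬝ᵥ (subMat C S') *ᵥ (fun i : S' => p i)
        ≤ lambdaMax (subMat C S') * ((fun i : S' => p i) ⬝ᵥ (fun i : S' => p i)) :=
          quad_le_lambdaMax (subMat_posDef hC S').1 _
      _ = lambdaMax (subMat C S') * B := by rw [← dot_restrict S' p p hpsupp', hpp]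
      _ ≤ lamM * B := mul_le_mul_of_nonneg_right (lambdaMax_le_lambdaMaxK hS') hBnn
  have hQ : B / lamM ≤ Q C b (lamM⁻¹ • p) := by
    have e1 : (lamM⁻¹ • p) ⬝ᵥ b = lamM⁻¹ * B := by
      rw [smul_dotProduct, hpb]; rfl
    have e2 : (lamM⁻¹ • p) ⬝ᵥ C *ᵥ (lamM⁻¹ • p) = lamM⁻¹ * (lamM⁻¹ * (p ⬝ᵥ C *ᵥ p)) := by
      rw [Matrix.mulVec_smul, smul_dotProduct, dotProduct_smul]; rfl
    rw [Q, e1, e2]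
    have h3 : lamM⁻¹ * (lamM⁻¹ * (p ⬝ᵥ C *ᵥ p)) ≤ lamM⁻¹ * (lamM⁻¹ * (lamM * B)) := by
      apply mul_le_mul_of_nonneg_left (mul_le_mul_of_nonneg_left hquad (by positivity)) (by positivity)
    have h4 : lamM⁻¹ * (lamM⁻¹ * (lamM * B)) = lamM⁻¹ * B := by
      field_simp
    rw [div_eq_inv_mul]
    linarith
  have hsupport : ∀ i ∉ S, (lamM⁻¹ • p) i = 0 := fun i hi => by
    simp [hpsupp i hi]
  have := le_trans hQ (Q_le_R2 hC b hsupport)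
  rw [div_le_iff₀ hlamMpos] at this
  linarith [this, mul_comm (R2 C b S) lamM]

lemma R2_empty (C : Matrix (Fin n) (Fin n) ℝ) (b : Fin n → ℝ) : R2 C b ∅ = 0 := by
  simp [R2, dotProduct]

lemma chain_props {C : Matrix (Fin n) (Fin n) ℝ} {b : Fin n → ℝ} {D : Finset (Fin n)} {k : ℕ}
    {T : ℕ → Finset (Fin n)} (hchain : IsOMPChain C b D k T) :
    ∀ i ≤ min k D.card, T i ⊆ D ∧ (T i).card = i := by
  intro i
  induction i with
  | zero => intro _; rw [hchain.1]; exact ⟨Finset.empty_subset D, rfl⟩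
  | succ i ih =>
    intro hi
    have hi' : i < min k D.card := by omega
    obtain ⟨hsub, hcard⟩ := ih (by omega)
    obtain ⟨m, hmD, hmT, hTsucc, -⟩ := hchain.2 i hi'
    constructor
    · rw [hTsucc]
      exact Finset.insert_subset hmD hsub
    · rw [hTsucc, Finset.card_insert_of_notMem hmT, hcard]

theorem greedy_guarantee {C : Matrix (Fin n) (Fin n) ℝ} {b : Fin n → ℝ} {D : Finset (Fin n)}
    {k : ℕ} {T : ℕ → Finset (Fin n)} (hC : C.PosDef) (hdiag : ∀ i, C i i = 1)
    (hk1 : 1 ≤ k) (h2k : 2 * k ≤ n) (hchain : IsOMPChain C b D k T)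
    {S : Finset (Fin n)} (hSD : S ⊆ D) (hSk : S.card ≤ k) :
    (1 - Real.exp (-(lambdaMinK C (2 * k)) ^ 2)) * R2 C b S
      ≤ R2 C b (T (min k D.card)) := by
  classical
  set lam := lambdaMinK C (2 * k) with hlam
  set L := min k D.card with hL
  have hlampos : 0 < lam := lambdaMinK_pos hC (by omega) h2k
  have hlamle : lam ≤ 1 := lambdaMinK_le_one hC hdiag (by omega) h2k
  have hkR : (1:ℝ) ≤ (k:ℝ) := by exact_mod_cast hk1
  have hfrac0 : 0 ≤ 1 - lam / k := by
    have : lam / k ≤ 1 := by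
      rw [div_le_one (by linarith)]
      linarith
    linarith
  have hR2Snn : 0 ≤ R2 C b S := R2_nonneg hC b S
  have hexp_nonneg : 0 ≤ Real.exp (-lam ^ 2) := (Real.exp_pos _).le
  -- per-step inequality
  have hstep : ∀ i < L, R2 C b S - R2 C b (T (i + 1))
      ≤ (1 - lam / k) * (R2 C b S - R2 C b (T i)) := by
    intro i hi
    obtain ⟨m, hmD, hmT, hTsucc, hmax⟩ := hchain.2 i hi
    obtain ⟨hTD, hTcard⟩ := chain_props hchain i (le_of_lt hi)
    set U := S ∪ T i with hU
    have hUcard : U.card ≤ 2 * k := by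
      have h1 : U.card ≤ S.card + (T i).card := Finset.card_union_le _ _
      have h2 : i < k := by omega
      omega
    set rm2 := (resCov C b (T i) m) ^ 2 with hrm2
    have hgap : R2 C b U ≤ R2 C b (T i) + (∑ x ∈ U \ T i, (resCov C b (T i) x) ^ 2) / lam :=
      gap_upper hC b Finset.subset_union_right hlampos
        (fun α hα => supported_quad_lower hC (by omega) h2k hUcard α hα)
    have hsum : ∑ x ∈ U \ T i, (resCov C b (T i) x) ^ 2 ≤ (k : ℝ) * rm2 := by
      have hbound : ∀ x ∈ U \ T i, (resCov C b (T i) x) ^ 2 ≤ rm2 := by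
        intro x hx
        obtain ⟨hxU, hxT⟩ := Finset.mem_sdiff.mp hx
        have hxS : x ∈ S := by
          rcases Finset.mem_union.mp hxU with h | h
          · exact h
          · exact absurd h hxT
        have habs := hmax x (hSD hxS) hxT
        calc (resCov C b (T i) x) ^ 2 = |resCov C b (T i) x| ^ 2 := (sq_abs _).symm
          _ ≤ |resCov C b (T i) m| ^ 2 := by
              exact pow_le_pow_left₀ (abs_nonneg _) habs 2
          _ = rm2 := sq_abs _
      calc ∑ x ∈ U \ T i, (resCov C b (T i) x) ^ 2 ≤ (U \ T i).card • rm2 :=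
            Finset.sum_le_card_nsmul _ _ _ hbound
        _ = ((U \ T i).card : ℝ) * rm2 := by rw [nsmul_eq_mul]
        _ ≤ (k : ℝ) * rm2 := by
            apply mul_le_mul_of_nonneg_right _ (sq_nonneg _)
            have hsub : U \ T i ⊆ S := by
              intro x hx
              obtain ⟨hxU, hxT⟩ := Finset.mem_sdiff.mp hx
              rcases Finset.mem_union.mp hxU with h | h
              · exact h
              · exact absurd h hxT
            have := Finset.card_le_card hsub
            exact_mod_cast le_trans this hSk
    have hgain : R2 C b (T i) + rm2 ≤ R2 C b (T (i + 1)) := by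
      rw [hTsucc]
      exact gain_lower hC b (hdiag m)
    have hmono : R2 C b S ≤ R2 C b U := R2_mono hC b Finset.subset_union_left
    have key : lam / k * (R2 C b S - R2 C b (T i)) ≤ rm2 := by
      have h5 : R2 C b S - R2 C b (T i) ≤ (k : ℝ) * rm2 / lam := by
        have h5a : (∑ x ∈ U \ T i, (resCov C b (T i) x) ^ 2) / lam ≤ (k : ℝ) * rm2 / lam := by
          gcongr
        linarith [hgap, hmono]
      have h6 : lam / k * (R2 C b S - R2 C b (T i)) ≤ lam / k * ((k : ℝ) * rm2 / lam) :=
        mul_le_mul_of_nonneg_left h5 (by positivity)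
      have h7 : lam / k * ((k : ℝ) * rm2 / lam) = rm2 := by
        field_simp
      linarith
    have hexpand : (1 - lam / k) * (R2 C b S - R2 C b (T i))
        = (R2 C b S - R2 C b (T i)) - lam / k * (R2 C b S - R2 C b (T i)) := by ring
    linarith
  -- induction
  have hind : ∀ i ≤ L, R2 C b S - R2 C b (T i) ≤ (1 - lam / k) ^ i * R2 C b S := by
    intro i
    induction i with
    | zero => intro _; rw [hchain.1, R2_empty, pow_zero, one_mul]; linarith
    | succ i ih =>
      intro hi
      have h1 := hstep i (by omega)
      have h2 := ih (by omega)
      calc R2 C b S - R2 C b (T (i + 1))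
          ≤ (1 - lam / k) * (R2 C b S - R2 C b (T i)) := h1
        _ ≤ (1 - lam / k) * ((1 - lam / k) ^ i * R2 C b S) :=
            mul_le_mul_of_nonneg_left h2 hfrac0
        _ = (1 - lam / k) ^ (i + 1) * R2 C b S := by ring
  by_cases hDk : k ≤ D.card
  · have hLk : L = k := by omega
    have hfinal := hind L (le_refl L)
    rw [hLk] at hfinal
    have hp1 : (1 - lam / k) ≤ Real.exp (-(lam / k)) := by
      linarith [Real.add_one_le_exp (-(lam / k))]
    have hp2 : (1 - lam / k) ^ k ≤ Real.exp (-(lam / k)) ^ k :=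
      pow_le_pow_left₀ hfrac0 hp1 k
    have hp3 : Real.exp (-(lam / k)) ^ k = Real.exp (-lam) := by
      rw [← Real.exp_nat_mul]
      congr 1
      field_simp
    have hp4 : Real.exp (-lam) ≤ Real.exp (-lam ^ 2) := by
      apply Real.exp_le_exp.mpr
      nlinarith
    have hp5 : (1 - lam / k) ^ k * R2 C b S ≤ Real.exp (-lam ^ 2) * R2 C b S := by
      apply mul_le_mul_of_nonneg_right _ hR2Snn
      rw [← hp3] at hp4
      linarith [hp2, hp4]
    have hexpand : (1 - Real.exp (-lam ^ 2)) * R2 C b S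
        = R2 C b S - Real.exp (-lam ^ 2) * R2 C b S := by ring
    rw [← hLk] at hfinal
    rw [hexpand]
    rw [hLk] at hfinal ⊢
    linarith
  · have hLD : L = D.card := by omega
    have hTL : T L = D := by
      obtain ⟨hsub, hcard⟩ := chain_props hchain L (le_refl L)
      apply Finset.eq_of_subset_of_card_le hsub
      omega
    have : R2 C b S ≤ R2 C b (T L) := by
      rw [hTL]
      exact R2_mono hC b hSD
    nlinarith [hexp_nonneg, hR2Snn]

end main

end OMPAux

open OMPAux

/-- Sandwiching `F_OMP` between multiples of the modular approximation `F̂`: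
`((1 − e^{−λmin(C,2k)²})/λmax(C,k)) F̂(D) ≤ F_OMP(D) ≤ F̂(D)/γ`, where `γ` is a lower
bound on the submodularity ratio of each `R²_j` at the empty set with parameter `k`. -/
theorem fomp_approx_fma {n s k : ℕ}
    (C : Matrix (Fin n) (Fin n) ℝ) (bs : Fin s → Fin n → ℝ) (hC : C.PosDef)
    (hdiag : ∀ i, C i i = 1) (hk1 : 1 ≤ k) (h2k : 2 * k ≤ n)
    (γ : ℝ) (hγ : 0 < γ)
    (hγsub : ∀ (j : Fin s) (S : Finset (Fin n)), S.card ≤ k →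
      γ * R2 C (bs j) S ≤ ∑ i ∈ S, (bs j i) ^ 2)
    (D : Finset (Fin n)) (Sel : Fin s → Finset (Fin n))
    (hSel : ∀ j, ∃ T, IsOMPChain C (bs j) D k T ∧ Sel j = T (min k D.card)) :
    (1 - Real.exp (-(lambdaMinK C (2 * k)) ^ 2)) / lambdaMaxK C k * Fma bs k D ≤
        ∑ j, R2 C (bs j) (Sel j) ∧
      ∑ j, R2 C (bs j) (Sel j) ≤ Fma bs k D / γ := by
  classical
  have hkn : k ≤ n := by omega
  set lam := lambdaMinK C (2 * k) with hlam
  set lamM := lambdaMaxK C k with hlamM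
  have hlampos : 0 < lam := lambdaMinK_pos hC (by omega) h2k
  have hlamMpos : 0 < lamM := lambdaMaxK_pos hC (by omega) hkn
  set E := Real.exp (-lam ^ 2) with hE
  have hE1 : E < 1 := by
    rw [hE]
    rw [Real.exp_lt_one_iff]
    nlinarith
  have hEpos : 0 < 1 - E := by linarith
  have hSelprop : ∀ j : Fin s, Sel j ⊆ D ∧ (Sel j).card ≤ k := by
    intro j
    obtain ⟨T, hchain, hSelj⟩ := hSel j
    obtain ⟨hsub, hcard⟩ := chain_props hchain (min k D.card) (le_refl _)
    rw [hSelj]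
    exact ⟨hsub, by omega⟩
  constructor
  · -- lower bound
    rw [Fma, Finset.mul_sum]
    apply Finset.sum_le_sum
    intro j _
    obtain ⟨T, hchain, hSelj⟩ := hSel j
    have hbound : ∀ x ∈ {x : ℝ | ∃ S ⊆ D, S.card ≤ k ∧ x = ∑ i ∈ S, (bs j i) ^ 2},
        x ≤ lamM / (1 - E) * R2 C (bs j) (Sel j) := by
      rintro x ⟨S, hSD, hSk, rfl⟩
      have h1 : ∑ i ∈ S, (bs j i) ^ 2 ≤ lamM * R2 C (bs j) S :=
        sum_sq_le_lamMax hC (by omega) hkn hSk (bs j)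
      have h2 : (1 - E) * R2 C (bs j) S ≤ R2 C (bs j) (Sel j) := by
        rw [hSelj]
        exact greedy_guarantee hC hdiag hk1 h2k hchain hSD hSk
      have h3 : R2 C (bs j) S ≤ R2 C (bs j) (Sel j) / (1 - E) := by
        rw [le_div_iff₀ hEpos]
        linarith
      calc ∑ i ∈ S, (bs j i) ^ 2 ≤ lamM * R2 C (bs j) S := h1
        _ ≤ lamM * (R2 C (bs j) (Sel j) / (1 - E)) :=
            mul_le_mul_of_nonneg_left h3 hlamMpos.le
        _ = lamM / (1 - E) * R2 C (bs j) (Sel j) := by ring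
    have hRnn : 0 ≤ R2 C (bs j) (Sel j) := R2_nonneg hC (bs j) (Sel j)
    have hsup : sSup {x : ℝ | ∃ S ⊆ D, S.card ≤ k ∧ x = ∑ i ∈ S, (bs j i) ^ 2}
        ≤ lamM / (1 - E) * R2 C (bs j) (Sel j) :=
      Real.sSup_le hbound (by positivity)
    calc (1 - E) / lamM * sSup {x : ℝ | ∃ S ⊆ D, S.card ≤ k ∧ x = ∑ i ∈ S, (bs j i) ^ 2}
        ≤ (1 - E) / lamM * (lamM / (1 - E) * R2 C (bs j) (Sel j)) :=
          mul_le_mul_of_nonneg_left hsup (by positivity)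
      _ = R2 C (bs j) (Sel j) := by
          field_simp
  · -- upper bound
    rw [Fma, Finset.sum_div]
    apply Finset.sum_le_sum
    intro j _
    obtain ⟨hsub, hcard⟩ := hSelprop j
    have hmem : (∑ i ∈ Sel j, (bs j i) ^ 2)
        ∈ {x : ℝ | ∃ S ⊆ D, S.card ≤ k ∧ x = ∑ i ∈ S, (bs j i) ^ 2} :=
      ⟨Sel j, hsub, hcard, rfl⟩
    have hfin : {x : ℝ | ∃ S ⊆ D, S.card ≤ k ∧ x = ∑ i ∈ S, (bs j i) ^ 2}.Finite := by
      apply (Set.finite_range (fun S : Finset (Fin n) => ∑ i ∈ S, (bs j i) ^ 2)).subset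
      rintro x ⟨S, -, -, rfl⟩
      exact ⟨S, rfl⟩
    have hle := le_csSup hfin.bddAbove hmem
    have h1 := hγsub j (Sel j) hcard
    rw [le_div_iff₀ hγ]
    calc R2 C (bs j) (Sel j) * γ = γ * R2 C (bs j) (Sel j) := by ring
      _ ≤ ∑ i ∈ Sel j, (bs j i) ^ 2 := h1
      _ ≤ _ := hle
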